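/- Let R be a commutative ring, 𝔸 a left s-unital nonunital R-algebra, and M a left module over 𝔸. Regard 𝔸 as a right module over itself via multiplication, and let (T, p) be any abelian group with an 𝔸-balanced bi-additive map p : 𝔸 → M → T satisfying the universal property of the nonunital tensor product 𝔸 ⊗_𝔸 M. Let F : T →+ M be the unique additive homomorphism with F(p x m) = x • m. Then F is bijective if and only if M is s-unital. In other words, over a left s-unital algebra, a left module is firm if and only if it is s-unital. -/

import Mathlib

universe u

/-- over a left s-unital nonunital `R`-algebra `𝔸`, a left
`𝔸`-module `M` is firm if and only if it is s-unital.  Here `(T, p)` is any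
realization of the nonunital tensor product `𝔸 ⊗_𝔸 M` given by its universal
property, and `F : T →+ M` is the unique additive map with `F (p x m) = σ x m`;
the claim is that `F` is bijective iff `M` is s-unital. -/
theorem firm_iff_sUnital_over_sUnital_algebra
    (R : Type*) (𝔸 M : Type u) [CommRing R] [NonUnitalRing 𝔸] [Module R 𝔸]
    [IsScalarTower R 𝔸 𝔸] [SMulCommClass R 𝔸 𝔸]
    [AddCommGroup M] [Module R M]
    (σ : 𝔸 → M → M)
    -- left `𝔸`-module axioms for `M`
    (σ_add : ∀ (a b : 𝔸) (m : M), σ (a + b) m = σ a m + σ b m)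
    (σ_madd : ∀ (a : 𝔸) (m m' : M), σ a (m + m') = σ a m + σ a m')
    (σ_mul : ∀ (a b : 𝔸) (m : M), σ (a * b) m = σ a (σ b m))
    (σ_smul : ∀ (r : R) (a : 𝔸) (m : M), σ (r • a) m = r • σ a m)
    (σ_smul' : ∀ (r : R) (a : 𝔸) (m : M), σ a (r • m) = r • σ a m)
    (hA : ∀ x : 𝔸, ∃ e : 𝔸, e * x = x)
    -- `(T, p)` realizes the nonunital tensor product `𝔸 ⊗_𝔸 M`
    (T : Type u) [AddCommGroup T] (p : 𝔸 → M → T)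
    (p_add : ∀ (x x' : 𝔸) (m : M), p (x + x') m = p x m + p x' m)
    (p_madd : ∀ (x : 𝔸) (m m' : M), p x (m + m') = p x m + p x m')
    (p_bal : ∀ (x a : 𝔸) (m : M), p (x * a) m = p x (σ a m))
    (p_rbal : ∀ (r : R) (x : 𝔸) (m : M), p (r • x) m = p x (r • m))
    (p_univ : ∀ (G : Type u) (_ : AddCommGroup G) (f : 𝔸 → M → G),
      ((∀ (x x' : 𝔸) (m : M), f (x + x') m = f x m + f x' m) ∧
       (∀ (x : 𝔸) (m m' : M), f x (m + m') = f x m + f x m') ∧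
       (∀ (x a : 𝔸) (m : M), f (x * a) m = f x (σ a m)) ∧
       (∀ (r : R) (x : 𝔸) (m : M), f (r • x) m = f x (r • m))) →
      ∃! F : T →+ G, ∀ (x : 𝔸) (m : M), F (p x m) = f x m)
    -- the canonical map `F : 𝔸 ⊗_𝔸 M → M`
    (F : T →+ M) (hF : ∀ (x : 𝔸) (m : M), F (p x m) = σ x m) :
    Function.Bijective F ↔ (∀ m : M, ∃ e : 𝔸, σ e m = m) := by
  -- basic consequences of bi-additivity
  have p_zero : ∀ m : M, p 0 m = 0 := by
    intro m
    have h := p_add 0 0 m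
    rw [add_zero] at h
    exact left_eq_add.mp h
  have p_mzero : ∀ x : 𝔸, p x 0 = 0 := by
    intro x
    have h := p_madd x 0 0
    rw [add_zero] at h
    exact left_eq_add.mp h
  have p_neg : ∀ (y : 𝔸) (m : M), p (-y) m = -(p y m) := by
    intro y m
    have h := p_add y (-y) m
    rw [add_neg_cancel, p_zero] at h
    exact eq_neg_of_add_eq_zero_left (by rw [add_comm]; exact h.symm)
  -- extensionality principle from uniqueness in the universal property
  have ext : ∀ {G : Type u} (_ : AddCommGroup G) (f g : T →+ G),
      (∀ (x : 𝔸) (m : M), f (p x m) = g (p x m)) → f = g := by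
    intro G instG f g h
    obtain ⟨F', _, hun⟩ := p_univ G instG (fun x m => f (p x m))
      ⟨fun x x' m => by simp only [p_add, map_add],
       fun x m m' => by simp only [p_madd, map_add],
       fun x a m => by simp only [p_bal],
       fun r x m => by simp only [p_rbal]⟩
    rw [hun f (fun x m => rfl), hun g (fun x m => (h x m).symm)]
  -- the left multiplication action `L : 𝔸 → T →+ T`
  have hLex : ∀ a : 𝔸, ∃ La : T →+ T, ∀ (x : 𝔸) (m : M), La (p x m) = p (a * x) m := by
    intro a
    exact (p_univ T inferInstance (fun x m => p (a * x) m)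
      ⟨fun x x' m => by simp only [mul_add, p_add],
       fun x m m' => by simp only [p_madd],
       fun x b m => by simp only [← mul_assoc, p_bal],
       fun r x m => by simp only [mul_smul_comm, p_rbal]⟩).exists
  choose L hL using hLex
  -- `F ∘ L a = σ a ∘ F`
  have hFL : ∀ (a : 𝔸) (t : T), F (L a t) = σ a (F t) := by
    intro a
    have h := ext (G := M) ‹_› (F.comp (L a)) ((AddMonoidHom.mk' (σ a) (σ_madd a)).comp F)
      (fun x m => by
        simp only [AddMonoidHom.comp_apply, AddMonoidHom.mk'_apply, hL, hF, σ_mul])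
    intro t; exact DFunLike.congr_fun h t
  -- `p a (F t) = L a t`
  have hpF : ∀ (a : 𝔸) (t : T), p a (F t) = L a t := by
    intro a
    have h := ext ‹_› ((AddMonoidHom.mk' (p a) (p_madd a)).comp F) (L a)
      (fun x m => by
        simp only [AddMonoidHom.comp_apply, AddMonoidHom.mk'_apply, hL, hF, p_bal])
    intro t; exact DFunLike.congr_fun h t
  -- `T` is generated by the simple tensors
  set S : AddSubgroup T := AddSubgroup.closure {t | ∃ x m, p x m = t} with hS
  have htop : ∀ t : T, t ∈ S := by
    obtain ⟨F', _, hun⟩ := p_univ (T ⧸ S) inferInstance (fun _ _ => (0 : T ⧸ S))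
      ⟨fun _ _ _ => by simp, fun _ _ _ => by simp, fun _ _ _ => rfl, fun _ _ _ => rfl⟩
    have h1 : QuotientAddGroup.mk' S = (0 : T →+ T ⧸ S) := by
      rw [hun (QuotientAddGroup.mk' S) (fun x m => by
        rw [QuotientAddGroup.mk'_apply, QuotientAddGroup.eq_zero_iff]
        exact AddSubgroup.subset_closure ⟨x, m, rfl⟩),
        hun 0 (fun x m => rfl)]
    intro t
    have h2 : QuotientAddGroup.mk' S t = 0 := by rw [h1]; rfl
    rwa [QuotientAddGroup.mk'_apply, QuotientAddGroup.eq_zero_iff] at h2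
  -- local units for lists of simple tensors (Tominaga's trick)
  have keylist : ∀ l : List T, (∀ g ∈ l, ∃ x m, p x m = g ∨ p x m = -g) →
      ∃ e : 𝔸, ∀ g ∈ l, L e g = g := by
    intro l
    induction l with
    | nil => exact fun _ => ⟨0, by simp⟩
    | cons g l ih =>
      intro h
      obtain ⟨e₁, he₁⟩ := ih (fun g' hg' => h g' (List.mem_cons_of_mem _ hg'))
      obtain ⟨x, m, hg⟩ := h g List.mem_cons_self
      obtain ⟨e₂, he₂⟩ := hA (x - e₁ * x)
      have hex : (e₁ + e₂ - e₂ * e₁) * x = x := by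
        rw [mul_sub] at he₂
        rw [sub_mul, add_mul, mul_assoc, add_sub_assoc, he₂]
        abel
      have expand : ∀ s : T, L (e₁ + e₂ - e₂ * e₁) s = L e₁ s + L e₂ s - L e₂ (L e₁ s) := by
        have hsub : L (e₁ + e₂ - e₂ * e₁) = L (e₁ + e₂) - L (e₂ * e₁) := by
          refine ext ‹_› _ _ (fun x m => ?_)
          simp only [hL, AddMonoidHom.sub_apply, AddMonoidHom.add_apply, AddMonoidHom.neg_apply,
            sub_eq_add_neg, add_mul, neg_mul, p_add, p_neg]
        have hadd : L (e₁ + e₂) = L e₁ + L e₂ := by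
          refine ext ‹_› _ _ (fun x m => ?_)
          simp only [hL, AddMonoidHom.add_apply, add_mul, p_add]
        have hmul : L (e₂ * e₁) = (L e₂).comp (L e₁) := by
          refine ext ‹_› _ _ (fun x m => ?_)
          simp only [hL, AddMonoidHom.comp_apply, mul_assoc]
        intro s
        rw [hsub, hadd, hmul]
        rfl
      refine ⟨e₁ + e₂ - e₂ * e₁, ?_⟩
      intro g' hg'
      rcases List.mem_cons.mp hg' with rfl | hg'
      · rcases hg with hg | hg
        · rw [← hg, hL, hex]
        · have hgg : g' = -(p x m) := by rw [hg, neg_neg]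
          rw [hgg, map_neg, hL, hex]
      · rw [expand, he₁ g' hg', add_sub_cancel_right]
  -- every element of `T` has a left local unit
  have key : ∀ t : T, ∃ e : 𝔸, L e t = t := by
    have hrep : ∀ t : T, ∃ l : List T,
        (∀ g ∈ l, ∃ x m, p x m = g ∨ p x m = -g) ∧ l.sum = t := by
      intro t
      refine AddSubgroup.closure_induction ?_ ?_ ?_ ?_ (htop t)
      · rintro g ⟨x, m, hxm⟩
        exact ⟨[g], fun g' hg' => by
          rw [List.mem_singleton] at hg'; exact hg' ▸ ⟨x, m, Or.inl hxm⟩, by simp⟩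
      · exact ⟨[], by simp, by simp⟩
      · rintro t₁ t₂ - - ⟨l₁, h₁, hs₁⟩ ⟨l₂, h₂, hs₂⟩
        refine ⟨l₁ ++ l₂, ?_, by rw [List.sum_append, hs₁, hs₂]⟩
        intro g hg
        rcases List.mem_append.mp hg with hg | hg
        · exact h₁ g hg
        · exact h₂ g hg
      · rintro t' - ⟨l, hl, hsl⟩
        refine ⟨l.map (fun g => -g), ?_, ?_⟩
        · intro g hg
          obtain ⟨g', hg', rfl⟩ := List.mem_map.mp hg
          obtain ⟨x, m, hxm⟩ := hl g' hg'
          rcases hxm with hxm | hxm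
          · exact ⟨x, m, Or.inr (by rw [hxm, neg_neg])⟩
          · exact ⟨x, m, Or.inl hxm⟩
        · rw [← hsl]
          clear hl hsl
          induction l with
          | nil => simp
          | cons a l ih =>
            simp only [List.map_cons, List.sum_cons, ih]
            abel
    intro t
    obtain ⟨l, hl, hsl⟩ := hrep t
    obtain ⟨e, he⟩ := keylist l hl
    refine ⟨e, ?_⟩
    rw [← hsl]
    clear hsl
    induction l with
    | nil => simp
    | cons a l ih =>
      simp only [List.sum_cons, map_add, he a List.mem_cons_self,
        ih (fun g hg => hl g (List.mem_cons_of_mem _ hg))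
          (fun g hg => he g (List.mem_cons_of_mem _ hg))]
  constructor
  · intro hbij m
    obtain ⟨t, ht⟩ := hbij.2 m
    obtain ⟨e, he⟩ := key t
    exact ⟨e, by rw [← ht, ← hFL, he]⟩
  · intro hs
    constructor
    · intro t₁ t₂ h
      have h0 : F (t₁ - t₂) = 0 := by rw [map_sub, h, sub_self]
      obtain ⟨e, he⟩ := key (t₁ - t₂)
      have hz : t₁ - t₂ = 0 := by rw [← he, ← hpF, h0, p_mzero]
      exact sub_eq_zero.mp hz
    · intro m
      obtain ⟨e, he⟩ := hs m
      exact ⟨p e m, by rw [hF, he]⟩
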